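/- Subject reduction: if Γ ⊢ M : σ is derivable in the type assignment system for Λ_R and M ⟶ N, then Γ ⊢ N : σ is derivable. -/

import Mathlib

/-- Terms of the record calculus `Λ_R`, with de Bruijn indices for bound variables
(so that terms are identified up to α-conversion) and labels drawn from `ℕ`.
Records are finite lists of label/term pairs; in `merge M fs` the right operand
is syntactically a record. -/
inductive Tm where
  | var : Nat → Tm
  | lam : Tm → Tm
  | app : Tm → Tm → Tm
  | sel : Tm → Nat → Tm
  | rcd : List (Nat × Tm) → Tm
  | merge : Tm → List (Nat × Tm) → Tm

namespace Tm

/-- The list of field labels of a record. -/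
def keys (fs : List (Nat × Tm)) : List Nat := fs.map Prod.fst

/-- The set of field labels `lbl(R)` of a record. -/
def lblR (fs : List (Nat × Tm)) : Finset Nat := (keys fs).toFinset

/-- Record merge on field lists: fields of the first record whose label does not
occur in the second record, followed by all fields of the second record. -/
def mergeFields (fs gs : List (Nat × Tm)) : List (Nat × Tm) :=
  fs.filter (fun p => decide (p.1 ∉ keys gs)) ++ gs

end Tm
namespace Tm

def liftF (f : Nat → Nat) : Nat → Nat
  | 0 => 0
  | n + 1 => f n + 1

mutual
/-- Renaming of (de Bruijn) variables. -/
def rename (f : Nat → Nat) : Tm → Tm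
  | var x => var (f x)
  | lam M => lam (rename (liftF f) M)
  | app M N => app (rename f M) (rename f N)
  | sel M l => sel (rename f M) l
  | rcd fs => rcd (renameFields f fs)
  | merge M fs => merge (rename f M) (renameFields f fs)
def renameFields (f : Nat → Nat) : List (Nat × Tm) → List (Nat × Tm)
  | [] => []
  | (l, M) :: fs => (l, rename f M) :: renameFields f fs
end

def upS (s : Nat → Tm) : Nat → Tm
  | 0 => var 0
  | n + 1 => rename Nat.succ (s n)

mutual
/-- Capture-avoiding (parallel) substitution. -/
def subst (s : Nat → Tm) : Tm → Tm
  | var x => s x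
  | lam M => lam (subst (upS s) M)
  | app M N => app (subst s M) (subst s N)
  | sel M l => sel (subst s M) l
  | rcd fs => rcd (substFields s fs)
  | merge M fs => merge (subst s M) (substFields s fs)
def substFields (s : Nat → Tm) : List (Nat × Tm) → List (Nat × Tm)
  | [] => []
  | (l, M) :: fs => (l, subst s M) :: substFields s fs
end

/-- `M[N/x]` for the outermost bound variable: capture-avoiding substitution of `N`
for the de Bruijn index `0` in `M`. -/
def subst0 (N M : Tm) : Tm :=
  subst (fun n => match n with | 0 => N | n + 1 => var n) M

end Tm
/-- The reduction relation of `Λ_R`: the least compatible relation containing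
(β), (sel) and (⊕). -/
inductive Red : Tm → Tm → Prop where
  | beta (M N : Tm) : Red (.app (.lam M) N) (Tm.subst0 N M)
  | sel {fs : List (Nat × Tm)} {l : Nat} {M : Tm} :
      List.lookup l fs = some M → Red (.sel (.rcd fs) l) M
  | mergeRcd (fs gs : List (Nat × Tm)) :
      Red (.merge (.rcd fs) gs) (.rcd (Tm.mergeFields fs gs))
  | appL {M M' : Tm} (N : Tm) : Red M M' → Red (.app M N) (.app M' N)
  | appR (M : Tm) {N N' : Tm} : Red N N' → Red (.app M N) (.app M N')
  | lam {M M' : Tm} : Red M M' → Red (.lam M) (.lam M')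
  | selC {M M' : Tm} (l : Nat) : Red M M' → Red (.sel M l) (.sel M' l)
  | mergeL {M M' : Tm} (fs : List (Nat × Tm)) : Red M M' → Red (.merge M fs) (.merge M' fs)
  | rcdField {M M' : Tm} (fs gs : List (Nat × Tm)) (l : Nat) : Red M M' →
      Red (.rcd (fs ++ (l, M) :: gs)) (.rcd (fs ++ (l, M') :: gs))
  | mergeField (N : Tm) {M M' : Tm} (fs gs : List (Nat × Tm)) (l : Nat) : Red M M' →
      Red (.merge N (fs ++ (l, M) :: gs)) (.merge N (fs ++ (l, M') :: gs))

/-- Reflexive–transitive closure `⟶*` of reduction. -/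
def RedStar : Tm → Tm → Prop := Relation.ReflTransGen Red
/-- Intersection and record types `𝕋`. Record types are the types satisfying `IsRec`. -/
inductive Ty where
  | const : Nat → Ty
  | omega : Ty
  | arrow : Ty → Ty → Ty
  | inter : Ty → Ty → Ty
  | empty : Ty
  | fld : Nat → Ty → Ty
  | merge : Ty → Ty → Ty
deriving DecidableEq

/-- The record types `𝕋_R ⊆ 𝕋`. -/
inductive IsRec : Ty → Prop where
  | empty : IsRec .empty
  | fld (l : Nat) (σ : Ty) : IsRec (.fld l σ)
  | merge {ρ₁ ρ₂ : Ty} : IsRec ρ₁ → IsRec ρ₂ → IsRec (.merge ρ₁ ρ₂)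
  | inter {ρ₁ ρ₂ : Ty} : IsRec ρ₁ → IsRec ρ₂ → IsRec (.inter ρ₁ ρ₂)

/-- Subtyping on `𝕋`: the least preorder satisfying the BCD axioms together with
the record and record-merge axioms. -/
inductive TySub : Ty → Ty → Prop where
  | refl (σ : Ty) : TySub σ σ
  | trans {σ τ υ : Ty} : TySub σ τ → TySub τ υ → TySub σ υ
  | le_omega (σ : Ty) : TySub σ .omega
  | omega_arrow : TySub .omega (.arrow .omega .omega)
  | inter_left (σ τ : Ty) : TySub (.inter σ τ) σ
  | inter_right (σ τ : Ty) : TySub (.inter σ τ) τ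
  | le_inter {σ τ₁ τ₂ : Ty} : TySub σ τ₁ → TySub σ τ₂ → TySub σ (.inter τ₁ τ₂)
  | arrow_inter (σ τ₁ τ₂ : Ty) :
      TySub (.inter (.arrow σ τ₁) (.arrow σ τ₂)) (.arrow σ (.inter τ₁ τ₂))
  | arrow_mono {σ₁ σ₂ τ₁ τ₂ : Ty} : TySub σ₂ σ₁ → TySub τ₁ τ₂ →
      TySub (.arrow σ₁ τ₁) (.arrow σ₂ τ₂)
  | fld_empty (l : Nat) (σ : Ty) : TySub (.fld l σ) .empty
  | fld_inter (l : Nat) (σ τ : Ty) :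
      TySub (.inter (.fld l σ) (.fld l τ)) (.fld l (.inter σ τ))
  | fld_mono {σ τ : Ty} (l : Nat) : TySub σ τ → TySub (.fld l σ) (.fld l τ)
  | merge_empty_r {ρ : Ty} : IsRec ρ → TySub (.merge ρ .empty) ρ
  | merge_empty_r' {ρ : Ty} : IsRec ρ → TySub ρ (.merge ρ .empty)
  | merge_empty_l {ρ : Ty} : IsRec ρ → TySub (.merge .empty ρ) ρ
  | merge_empty_l' {ρ : Ty} : IsRec ρ → TySub ρ (.merge .empty ρ)
  | merge_assoc {ρ₁ ρ₂ ρ₃ : Ty} : IsRec ρ₁ → IsRec ρ₂ → IsRec ρ₃ →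
      TySub (.merge (.merge ρ₁ ρ₂) ρ₃) (.merge ρ₁ (.merge ρ₂ ρ₃))
  | merge_assoc' {ρ₁ ρ₂ ρ₃ : Ty} : IsRec ρ₁ → IsRec ρ₂ → IsRec ρ₃ →
      TySub (.merge ρ₁ (.merge ρ₂ ρ₃)) (.merge (.merge ρ₁ ρ₂) ρ₃)
  | merge_inter {ρ₁ ρ₂ ρ₃ : Ty} : IsRec ρ₁ → IsRec ρ₂ → IsRec ρ₃ →
      TySub (.merge (.inter ρ₁ ρ₂) ρ₃) (.inter (.merge ρ₁ ρ₃) (.merge ρ₂ ρ₃))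
  | merge_inter' {ρ₁ ρ₂ ρ₃ : Ty} : IsRec ρ₁ → IsRec ρ₂ → IsRec ρ₃ →
      TySub (.inter (.merge ρ₁ ρ₃) (.merge ρ₂ ρ₃)) (.merge (.inter ρ₁ ρ₂) ρ₃)
  | fld_absorb {ρ : Ty} (l : Nat) (σ τ : Ty) : IsRec ρ →
      TySub (.merge (.fld l σ) (.inter (.fld l τ) ρ)) (.inter (.fld l τ) ρ)
  | fld_absorb' {ρ : Ty} (l : Nat) (σ τ : Ty) : IsRec ρ →
      TySub (.inter (.fld l τ) ρ) (.merge (.fld l σ) (.inter (.fld l τ) ρ))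
  | fld_comm {ρ : Ty} {l l' : Nat} (σ τ : Ty) : l ≠ l' → IsRec ρ →
      TySub (.merge (.fld l σ) (.inter (.fld l' τ) ρ))
          (.inter (.fld l' τ) (.merge (.fld l σ) ρ))
  | fld_comm' {ρ : Ty} {l l' : Nat} (σ τ : Ty) : l ≠ l' → IsRec ρ →
      TySub (.inter (.fld l' τ) (.merge (.fld l σ) ρ))
          (.merge (.fld l σ) (.inter (.fld l' τ) ρ))
  | merge_mono_l {ρ₁ ρ₂ ρ : Ty} : IsRec ρ₁ → IsRec ρ₂ → IsRec ρ →
      TySub ρ₁ ρ₂ → TySub (.merge ρ₁ ρ) (.merge ρ₂ ρ)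
  | merge_congr_r {ρ ρ₁ ρ₂ : Ty} : IsRec ρ → IsRec ρ₁ → IsRec ρ₂ →
      TySub ρ₁ ρ₂ → TySub ρ₂ ρ₁ → TySub (.merge ρ ρ₁) (.merge ρ ρ₂)

/-- Type equality: mutual subtyping. -/
def TyEq (σ τ : Ty) : Prop := TySub σ τ ∧ TySub τ σ
/-- The label map on record types. -/
def lbl : Ty → Finset Nat
  | .const _ => ∅
  | .omega => ∅
  | .arrow _ _ => ∅
  | .empty => ∅
  | .fld l _ => {l}
  | .inter ρ₁ ρ₂ => lbl ρ₁ ∪ lbl ρ₂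
  | .merge ρ₁ ρ₂ => lbl ρ₁ ∪ lbl ρ₂
/-- The type assignment system for `Λ_R`. With de Bruijn indices, a basis `Γ` is a
list of types, extension `Γ, x:σ` is `σ :: Γ`, and the axiom rule looks up the
type of a variable index in `Γ`. -/
inductive Typing : List Ty → Tm → Ty → Prop where
  | var {Γ : List Ty} {x : Nat} {σ : Ty} :
      Γ[x]? = some σ → Typing Γ (.var x) σ
  | lam {Γ : List Ty} {M : Tm} {σ τ : Ty} :
      Typing (σ :: Γ) M τ → Typing Γ (.lam M) (.arrow σ τ)
  | app {Γ : List Ty} {M N : Tm} {σ τ : Ty} :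
      Typing Γ M (.arrow σ τ) → Typing Γ N σ → Typing Γ (.app M N) τ
  | inter {Γ : List Ty} {M : Tm} {σ τ : Ty} :
      Typing Γ M σ → Typing Γ M τ → Typing Γ M (.inter σ τ)
  | omega {Γ : List Ty} (M : Tm) : Typing Γ M .omega
  | sub {Γ : List Ty} {M : Tm} {σ τ : Ty} :
      Typing Γ M σ → TySub σ τ → Typing Γ M τ
  | empty {Γ : List Ty} (fs : List (Nat × Tm)) : Typing Γ (.rcd fs) .empty
  | rcd {Γ : List Ty} {fs : List (Nat × Tm)} {l : Nat} {M : Tm} {σ : Ty} :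
      List.lookup l fs = some M → Typing Γ M σ → Typing Γ (.rcd fs) (.fld l σ)
  | sel {Γ : List Ty} {M : Tm} {l : Nat} {σ : Ty} :
      Typing Γ M (.fld l σ) → Typing Γ (.sel M l) σ
  | merge {Γ : List Ty} {M : Tm} {fs : List (Nat × Tm)} {ρ₁ ρ₂ : Ty} :
      Typing Γ M ρ₁ → Typing Γ (.rcd fs) ρ₂ → IsRec ρ₁ → IsRec ρ₂ →
      Tm.lblR fs = lbl ρ₂ → Typing Γ (.merge M fs) (.merge ρ₁ ρ₂)
/-! ### Basic machinery -/

def interList (L : List Ty) : Ty := L.foldr .inter .omega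

lemma interList_nil : interList [] = .omega := rfl
lemma interList_cons (a : Ty) (L : List Ty) :
    interList (a :: L) = .inter a (interList L) := rfl

lemma TySub.le_interList {υ : Ty} {L : List Ty} (h : ∀ σ ∈ L, TySub υ σ) :
    TySub υ (interList L) := by
  induction L with
  | nil => exact .le_omega υ
  | cons a t ih =>
    exact .le_inter (h a (by simp)) (ih fun σ hσ => h σ (by simp [hσ]))

lemma interList_le {L : List Ty} {σ : Ty} (h : σ ∈ L) : TySub (interList L) σ := by
  induction L with
  | nil => cases h
  | cons a t ih =>
    rcases List.mem_cons.1 h with h | h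
    · subst h; exact .inter_left _ _
    · exact .trans (.inter_right _ _) (ih h)

lemma interList_append_le_left (A B : List Ty) :
    TySub (interList (A ++ B)) (interList A) :=
  TySub.le_interList fun σ hσ => interList_le (by simp [hσ])

lemma interList_append_le_right (A B : List Ty) :
    TySub (interList (A ++ B)) (interList B) :=
  TySub.le_interList fun σ hσ => interList_le (by simp [hσ])

/-- The top-level field components of a type at label `l`. -/
def flds (l : Nat) : Ty → List Ty
  | .fld l' σ => if l' = l then [σ] else []
  | .inter σ τ => flds l σ ++ flds l τ
  | .merge ρ₁ ρ₂ => if l ∈ lbl ρ₂ then flds l ρ₂ else flds l ρ₁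
  | _ => []

/-- The top-level arrow components of a type. -/
def arrs : Ty → List (Ty × Ty)
  | .arrow σ τ => [(σ, τ)]
  | .inter σ τ => arrs σ ++ arrs τ
  | _ => []

lemma arrs_isRec {ρ : Ty} (h : IsRec ρ) : arrs ρ = [] := by
  induction h <;> simp [arrs, *]

lemma flds_eq_nil_iff {l : Nat} {σ : Ty} : flds l σ = [] ↔ l ∉ lbl σ := by
  induction σ with
  | fld l' τ =>
    by_cases h : l' = l <;> simp [flds, lbl, h]
    exact fun he => h he.symm
  | inter σ τ ih₁ ih₂ => simp [flds, lbl, ih₁, ih₂]; try tauto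
  | merge ρ₁ ρ₂ ih₁ ih₂ =>
    by_cases h : l ∈ lbl ρ₂ <;> simp [flds, lbl, h, ih₁, ih₂]
  | _ => simp [flds, lbl]

lemma flds_ne_nil_of_mem {l : Nat} {σ τ : Ty} (h : τ ∈ flds l σ) : l ∈ lbl σ := by
  by_contra hc
  rw [← flds_eq_nil_iff] at hc
  simp [hc] at h

lemma lbl_anti {σ τ : Ty} (h : TySub σ τ) : lbl τ ⊆ lbl σ := by
  induction h <;>
    (try simp_all [lbl, Finset.union_subset_iff, Finset.subset_union_left,
      Finset.subset_union_right]) <;>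
    (try constructor) <;> (intro x hx) <;> (try simp_all) <;> tauto
/-! ### Soundness of subtyping w.r.t. field components -/

lemma interList_compose {G : List Ty} :
    ∀ S : List Ty, S ≠ [] →
      (∀ b ∈ S, ∃ T, T ≠ [] ∧ (∀ x ∈ T, x ∈ G) ∧ TySub (interList T) b) →
      ∃ T, T ≠ [] ∧ (∀ x ∈ T, x ∈ G) ∧ TySub (interList T) (interList S)
  | [], h, _ => absurd rfl h
  | b :: S', _, hall => by
    obtain ⟨Tb, hTbne, hTbG, hTb⟩ := hall b (by simp)
    rcases eq_or_ne S' [] with rfl | hne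
    · exact ⟨Tb, hTbne, hTbG, .le_inter hTb (.le_omega _)⟩
    · obtain ⟨T', hT'ne, hT'G, hT'⟩ :=
        interList_compose S' hne fun b hb => hall b (by simp [hb])
      refine ⟨Tb ++ T', by simp [hTbne], ?_, ?_⟩
      · intro x hx; rcases List.mem_append.1 hx with h | h
        exacts [hTbG x h, hT'G x h]
      · exact .le_inter (.trans (interList_append_le_left _ _) hTb)
          (.trans (interList_append_le_right _ _) hT')

lemma flds_single {F : List Ty} {σ : Ty} (h : σ ∈ F) :
    ∃ S, S ≠ [] ∧ (∀ τ ∈ S, τ ∈ F) ∧ TySub (interList S) σ :=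
  ⟨[σ], by simp, by simp [h], .inter_left _ _⟩

lemma flds_sound {υ₁ υ₂ : Ty} (h : TySub υ₁ υ₂) :
    ∀ l σ, σ ∈ flds l υ₂ →
      ∃ S : List Ty, S ≠ [] ∧ (∀ τ ∈ S, τ ∈ flds l υ₁) ∧ TySub (interList S) σ := by
  induction h with
  | refl => exact fun l σ h => flds_single h
  | trans h₁ h₂ ih₁ ih₂ =>
    intro l σ hσ
    obtain ⟨S, hSne, hSm, hS⟩ := ih₂ l σ hσ
    obtain ⟨T, hTne, hTm, hT⟩ := interList_compose S hSne fun b hb => ih₁ l b (hSm b hb)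
    exact ⟨T, hTne, hTm, .trans hT hS⟩
  | le_omega => intro l σ hσ; simp [flds] at hσ
  | omega_arrow => intro l σ hσ; simp [flds] at hσ
  | inter_left σ₁ τ₁ =>
    intro l σ hσ
    exact flds_single (by simp only [flds]; exact List.mem_append_left _ hσ)
  | inter_right σ₁ τ₁ =>
    intro l σ hσ
    exact flds_single (by simp only [flds]; exact List.mem_append_right _ hσ)
  | le_inter h₁ h₂ ih₁ ih₂ =>
    intro l σ hσ
    simp only [flds] at hσ
    rcases List.mem_append.1 hσ with h | h
    exacts [ih₁ l σ h, ih₂ l σ h]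
  | arrow_inter => intro l σ hσ; simp [flds] at hσ
  | arrow_mono _ _ => intro l σ hσ; simp [flds] at hσ
  | fld_empty => intro l σ hσ; simp [flds] at hσ
  | fld_inter l₀ σ₀ τ₀ =>
    intro l σ hσ
    simp only [flds] at hσ
    split at hσ
    · rename_i hl
      simp at hσ; subst hσ
      refine ⟨[σ₀, τ₀], by simp, by simp [flds, hl], ?_⟩
      exact .le_inter (.inter_left _ _) (.trans (.inter_right _ _) (.inter_left _ _))
    · simp at hσ
  | fld_mono l₀ hst ih =>
    intro l σ hσ
    simp only [flds] at hσ
    split at hσ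
    · rename_i hl
      simp at hσ; subst hσ
      exact ⟨[_], by simp, by simp [flds, hl], .trans (.inter_left _ _) hst⟩
    · simp at hσ
  | merge_empty_r hρ =>
    intro l σ hσ
    exact flds_single (by simp [flds, lbl]; exact hσ)
  | merge_empty_r' hρ =>
    intro l σ hσ
    simp [flds, lbl] at hσ
    exact flds_single hσ
  | merge_empty_l hρ =>
    intro l σ hσ
    have hl := flds_ne_nil_of_mem hσ
    exact flds_single (by simp [flds, hl]; exact hσ)
  | merge_empty_l' hρ =>
    intro l σ hσ
    simp only [flds] at hσ
    split at hσ
    · exact flds_single hσ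
    · simp [flds] at hσ
  | @merge_assoc ρ₁ ρ₂ ρ₃ h₁ h₂ h₃ =>
    intro l σ hσ
    apply flds_single
    by_cases h3 : l ∈ lbl ρ₃ <;> by_cases h2 : l ∈ lbl ρ₂ <;>
      simp_all [flds, lbl]
  | @merge_assoc' ρ₁ ρ₂ ρ₃ h₁ h₂ h₃ =>
    intro l σ hσ
    apply flds_single
    by_cases h3 : l ∈ lbl ρ₃ <;> by_cases h2 : l ∈ lbl ρ₂ <;>
      simp_all [flds, lbl]
  | @merge_inter ρ₁ ρ₂ ρ₃ h₁ h₂ h₃ =>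
    intro l σ hσ
    apply flds_single
    by_cases h3 : l ∈ lbl ρ₃ <;> simp_all [flds, lbl] <;> tauto
  | @merge_inter' ρ₁ ρ₂ ρ₃ h₁ h₂ h₃ =>
    intro l σ hσ
    apply flds_single
    by_cases h3 : l ∈ lbl ρ₃ <;> simp_all [flds, lbl] <;> tauto
  | @fld_absorb ρ l₀ σ₀ τ₀ hρ =>
    intro l σ hσ
    have hl := flds_ne_nil_of_mem hσ
    exact flds_single (by simp only [flds, if_pos hl]; exact hσ)
  | @fld_absorb' ρ l₀ σ₀ τ₀ hρ =>
    intro l σ hσ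
    simp only [flds] at hσ
    split at hσ
    · exact flds_single hσ
    · rename_i hnot
      have hne : l₀ ≠ l := by
        intro he; subst he; exact hnot (by simp [lbl])
      simp [flds, hne] at hσ
  | @fld_comm ρ l₀ l' σ₀ τ₀ hne hρ =>
    intro l σ hσ
    apply flds_single
    simp only [flds] at hσ
    rcases List.mem_append.1 hσ with h | h
    · have hl : l' = l := by by_contra hc; simp [flds, hc] at h
      subst hl
      simp only [flds, if_pos rfl] at h
      have : l' ∈ lbl (Ty.inter (.fld l' τ₀) ρ) := by simp [lbl]
      simp only [flds, if_pos this]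
      exact List.mem_append_left _ h
    · by_cases hr : l ∈ lbl ρ
      · rw [if_pos hr] at h
        have : l ∈ lbl (Ty.inter (.fld l' τ₀) ρ) := by simp [lbl, hr]
        simp only [flds, if_pos this]
        exact List.mem_append_right _ h
      · rw [if_neg hr] at h
        have hl : l₀ = l := by by_contra hc; simp [flds, hc] at h
        subst hl
        have : l₀ ∉ lbl (Ty.inter (.fld l' τ₀) ρ) := by simp [lbl, hr, hne]
        simp only [flds, if_neg this]
        simpa using h
  | @fld_comm' ρ l₀ l' σ₀ τ₀ hne hρ =>
    intro l σ hσ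
    apply flds_single
    simp only [flds] at hσ ⊢
    split at hσ
    · rename_i hc
      rcases List.mem_append.1 hσ with h | h
      · exact List.mem_append_left _ h
      · have hr : l ∈ lbl ρ := flds_ne_nil_of_mem h
        exact List.mem_append_right _ (by simp only [flds, if_pos hr]; exact h)
    · rename_i hc
      have hr : l ∉ lbl ρ := fun hx => hc (by simp [lbl, hx])
      exact List.mem_append_right _ (by simp only [flds, if_neg hr]; exact hσ)
  | @merge_mono_l ρ₁ ρ₂ ρ h₁ h₂ h₃ hsub ih =>
    intro l σ hσ
    by_cases hc : l ∈ lbl ρ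
    · simp only [flds, if_pos hc] at hσ
      exact flds_single (by simp only [flds, if_pos hc]; exact hσ)
    · simp only [flds, if_neg hc] at hσ
      obtain ⟨S, h1, h2, h3'⟩ := ih l σ hσ
      exact ⟨S, h1, fun τ hτ => by simp only [flds, if_neg hc]; exact h2 τ hτ, h3'⟩
  | @merge_congr_r ρ ρ₁ ρ₂ h₀ h₁ h₂ s₁₂ s₂₁ ih₁₂ ih₂₁ =>
    intro l σ hσ
    have hl : lbl ρ₁ = lbl ρ₂ := Finset.Subset.antisymm (lbl_anti s₂₁) (lbl_anti s₁₂)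
    by_cases hc : l ∈ lbl ρ₂
    · have hc1 : l ∈ lbl ρ₁ := by rw [hl]; exact hc
      simp only [flds, if_pos hc] at hσ
      obtain ⟨S, h1, h2, h3'⟩ := ih₁₂ l σ hσ
      exact ⟨S, h1, fun τ hτ => by simp only [flds, if_pos hc1]; exact h2 τ hτ, h3'⟩
    · have hc1 : l ∉ lbl ρ₁ := by rw [hl]; exact hc
      simp only [flds, if_neg hc] at hσ
      exact flds_single (by simp only [flds, if_neg hc1]; exact hσ)
/-! ### Soundness of subtyping w.r.t. arrow components -/

lemma arrs_compose {G : List (Ty × Ty)} :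
    ∀ S : List (Ty × Ty),
      (∀ p ∈ S, ∃ T : List (Ty × Ty), (∀ q ∈ T, q ∈ G) ∧ TySub p.1 (interList (T.map Prod.fst)) ∧
          TySub (interList (T.map Prod.snd)) p.2) →
      ∃ T : List (Ty × Ty), (∀ q ∈ T, q ∈ G) ∧
        TySub (interList (S.map Prod.fst)) (interList (T.map Prod.fst)) ∧
        TySub (interList (T.map Prod.snd)) (interList (S.map Prod.snd))
  | [], _ => ⟨[], by simp, .refl _, .refl _⟩
  | p :: S', hall => by
    obtain ⟨Tp, hTpG, hTp1, hTp2⟩ := hall p (by simp)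
    obtain ⟨T', hT'G, hT'1, hT'2⟩ := arrs_compose S' fun q hq => hall q (by simp [hq])
    refine ⟨Tp ++ T', ?_, ?_, ?_⟩
    · intro q hq; rcases List.mem_append.1 hq with h | h
      exacts [hTpG q h, hT'G q h]
    · apply TySub.le_interList
      intro x hx
      simp only [List.map_append] at hx
      rcases List.mem_append.1 hx with h | h
      · exact .trans (.inter_left _ _) (.trans hTp1 (interList_le h))
      · exact .trans (.inter_right _ _) (.trans hT'1 (interList_le h))
    · refine .le_inter ?_ ?_
      · refine .trans ?_ hTp2
        exact TySub.le_interList fun x hx => interList_le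
          (by simp only [List.map_append]; exact List.mem_append_left _ hx)
      · refine .trans ?_ hT'2
        exact TySub.le_interList fun x hx => interList_le
          (by simp only [List.map_append]; exact List.mem_append_right _ hx)

lemma arrs_single {G : List (Ty × Ty)} {p : Ty × Ty} (hp : p ∈ G) :
    ∃ S : List (Ty × Ty), (∀ q ∈ S, q ∈ G) ∧ TySub p.1 (interList (S.map Prod.fst)) ∧
      TySub (interList (S.map Prod.snd)) p.2 :=
  ⟨[p], by simp [hp], .le_inter (.refl _) (.le_omega _), .inter_left _ _⟩

lemma arrs_sound {υ₁ υ₂ : Ty} (h : TySub υ₁ υ₂) :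
    ∀ p ∈ arrs υ₂, ∃ S : List (Ty × Ty), (∀ q ∈ S, q ∈ arrs υ₁) ∧
      TySub p.1 (interList (S.map Prod.fst)) ∧ TySub (interList (S.map Prod.snd)) p.2 := by
  induction h with
  | refl => exact fun p hp => arrs_single hp
  | trans h₁ h₂ ih₁ ih₂ =>
    intro p hp
    obtain ⟨S, hSm, hS1, hS2⟩ := ih₂ p hp
    obtain ⟨T, hTm, hT1, hT2⟩ := arrs_compose S fun q hq => ih₁ q (hSm q hq)
    exact ⟨T, hTm, .trans hS1 hT1, .trans hT2 hS2⟩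
  | le_omega => simp [arrs]
  | omega_arrow =>
    intro p hp
    simp [arrs] at hp; subst hp
    exact ⟨[], by simp, .le_omega _, .le_omega _⟩
  | inter_left σ τ =>
    intro p hp
    exact arrs_single (by simp only [arrs]; exact List.mem_append_left _ hp)
  | inter_right σ τ =>
    intro p hp
    exact arrs_single (by simp only [arrs]; exact List.mem_append_right _ hp)
  | le_inter h₁ h₂ ih₁ ih₂ =>
    intro p hp
    simp only [arrs] at hp
    rcases List.mem_append.1 hp with h | h
    exacts [ih₁ p h, ih₂ p h]
  | arrow_inter σ τ₁ τ₂ =>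
    intro p hp
    simp [arrs] at hp; subst hp
    refine ⟨[(σ, τ₁), (σ, τ₂)], by simp [arrs], ?_, ?_⟩
    · exact .le_inter (.refl _) (.le_inter (.refl _) (.le_omega _))
    · exact .le_inter (.inter_left _ _) (.trans (.inter_right _ _) (.inter_left _ _))
  | @arrow_mono σ₁ σ₂ τ₁ τ₂ hs ht =>
    intro p hp
    simp [arrs] at hp; subst hp
    refine ⟨[(σ₁, τ₁)], by simp [arrs], ?_, ?_⟩
    · exact .le_inter hs (.le_omega _)
    · exact .trans (.inter_left _ _) ht
  | fld_empty => simp [arrs]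
  | fld_inter => simp [arrs]
  | fld_mono l h ih => simp [arrs]
  | merge_empty_r h => intro p hp; rw [arrs_isRec h] at hp; cases hp
  | merge_empty_r' h => simp [arrs]
  | merge_empty_l h => intro p hp; rw [arrs_isRec h] at hp; cases hp
  | merge_empty_l' h => simp [arrs]
  | merge_assoc _ _ _ => simp [arrs]
  | merge_assoc' _ _ _ => simp [arrs]
  | merge_inter _ _ _ => simp [arrs]
  | merge_inter' _ _ _ => simp [arrs]
  | fld_absorb _ _ _ h => intro p hp; simp [arrs, arrs_isRec h] at hp
  | fld_absorb' _ _ _ h => simp [arrs]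
  | fld_comm _ _ _ _ => simp [arrs]
  | fld_comm' _ _ _ _ => simp [arrs]
  | merge_mono_l _ _ _ _ => simp [arrs]
  | merge_congr_r _ _ _ _ _ => simp [arrs]
/-! ### Structural typing lemmas -/

lemma lookup_renameFields {f : Nat → Nat} {l : Nat} :
    ∀ {fs : List (Nat × Tm)} {M : Tm}, List.lookup l fs = some M →
      List.lookup l (Tm.renameFields f fs) = some (Tm.rename f M)
  | [], M, h => by simp [List.lookup] at h
  | (k, N) :: fs, M, h => by
    rw [Tm.renameFields]
    by_cases hk : l = k
    · subst hk; simp [List.lookup] at h ⊢; exact congrArg _ h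
    · have hk' : (l == k) = false := by simp [hk]
      simp only [List.lookup, hk'] at h ⊢
      exact lookup_renameFields h

lemma lookup_substFields {s : Nat → Tm} {l : Nat} :
    ∀ {fs : List (Nat × Tm)} {M : Tm}, List.lookup l fs = some M →
      List.lookup l (Tm.substFields s fs) = some (Tm.subst s M)
  | [], M, h => by simp [List.lookup] at h
  | (k, N) :: fs, M, h => by
    rw [Tm.substFields]
    by_cases hk : l = k
    · subst hk; simp [List.lookup] at h ⊢; exact congrArg _ h
    · have hk' : (l == k) = false := by simp [hk]
      simp only [List.lookup, hk'] at h ⊢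
      exact lookup_substFields h

lemma keys_renameFields (f : Nat → Nat) :
    ∀ fs : List (Nat × Tm), Tm.keys (Tm.renameFields f fs) = Tm.keys fs
  | [] => rfl
  | (k, N) :: fs => by
    rw [Tm.renameFields]
    simp [Tm.keys] at *
    exact keys_renameFields f fs

lemma keys_substFields (s : Nat → Tm) :
    ∀ fs : List (Nat × Tm), Tm.keys (Tm.substFields s fs) = Tm.keys fs
  | [] => rfl
  | (k, N) :: fs => by
    rw [Tm.substFields]
    simp [Tm.keys] at *
    exact keys_substFields s fs

lemma lblR_renameFields (f : Nat → Nat) (fs : List (Nat × Tm)) :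
    Tm.lblR (Tm.renameFields f fs) = Tm.lblR fs := by
  simp [Tm.lblR, keys_renameFields]

lemma lblR_substFields (s : Nat → Tm) (fs : List (Nat × Tm)) :
    Tm.lblR (Tm.substFields s fs) = Tm.lblR fs := by
  simp [Tm.lblR, keys_substFields]

lemma typing_rename {Γ : List Ty} {M : Tm} {τ : Ty} (h : Typing Γ M τ) :
    ∀ Δ f, (∀ x σ, Γ[x]? = some σ → Δ[f x]? = some σ) →
      Typing Δ (Tm.rename f M) τ := by
  induction h with
  | var hx => intro Δ f hf; exact .var (hf _ _ hx)
  | lam h ih =>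
    intro Δ f hf
    simp only [Tm.rename]
    refine .lam (ih _ _ ?_)
    intro x σ' hx
    cases x with
    | zero => simp [Tm.liftF]; simp at hx; exact hx
    | succ n => simpa [Tm.liftF] using hf n σ' (by simpa using hx)
  | app h₁ h₂ ih₁ ih₂ =>
    intro Δ f hf; simp only [Tm.rename]; exact .app (ih₁ _ _ hf) (ih₂ _ _ hf)
  | inter h₁ h₂ ih₁ ih₂ => intro Δ f hf; exact .inter (ih₁ _ _ hf) (ih₂ _ _ hf)
  | omega M => intro Δ f hf; exact .omega _
  | sub h hs ih => intro Δ f hf; exact .sub (ih _ _ hf) hs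
  | empty fs => intro Δ f hf; simp only [Tm.rename]; exact .empty _
  | rcd hl h ih =>
    intro Δ f hf
    simp only [Tm.rename]
    exact .rcd (lookup_renameFields hl) (ih _ _ hf)
  | sel h ih => intro Δ f hf; simp only [Tm.rename]; exact .sel (ih _ _ hf)
  | merge h₁ h₂ hr₁ hr₂ hlbl ih₁ ih₂ =>
    intro Δ f hf
    simp only [Tm.rename]
    have h2 := ih₂ Δ f hf
    simp only [Tm.rename] at h2
    exact .merge (ih₁ _ _ hf) h2 hr₁ hr₂ (by rw [lblR_renameFields]; exact hlbl)

lemma typing_subst {Γ : List Ty} {M : Tm} {τ : Ty} (h : Typing Γ M τ) :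
    ∀ Δ s, (∀ x σ, Γ[x]? = some σ → Typing Δ (s x) σ) →
      Typing Δ (Tm.subst s M) τ := by
  induction h with
  | var hx => intro Δ s hs; exact hs _ _ hx
  | lam h ih =>
    intro Δ s hs
    simp only [Tm.subst]
    refine .lam (ih _ _ ?_)
    intro x σ' hx
    cases x with
    | zero =>
      simp at hx; subst hx
      exact .var rfl
    | succ n =>
      simp only [Tm.upS]
      refine typing_rename (hs n σ' (by simpa using hx)) _ _ ?_
      intro y σ'' hy
      simpa using hy
  | app h₁ h₂ ih₁ ih₂ =>
    intro Δ s hs; simp only [Tm.subst]; exact .app (ih₁ _ _ hs) (ih₂ _ _ hs)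
  | inter h₁ h₂ ih₁ ih₂ => intro Δ s hs; exact .inter (ih₁ _ _ hs) (ih₂ _ _ hs)
  | omega M => intro Δ s hs; exact .omega _
  | sub h hsub ih => intro Δ s hs; exact .sub (ih _ _ hs) hsub
  | empty fs => intro Δ s hs; simp only [Tm.subst]; exact .empty _
  | rcd hl h ih =>
    intro Δ s hs
    simp only [Tm.subst]
    exact .rcd (lookup_substFields hl) (ih _ _ hs)
  | sel h ih => intro Δ s hs; simp only [Tm.subst]; exact .sel (ih _ _ hs)
  | merge h₁ h₂ hr₁ hr₂ hlbl ih₁ ih₂ =>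
    intro Δ s hs
    simp only [Tm.subst]
    have h2 := ih₂ Δ s hs
    simp only [Tm.subst] at h2
    exact .merge (ih₁ _ _ hs) h2 hr₁ hr₂ (by rw [lblR_substFields]; exact hlbl)

lemma typing_subst0 {Γ : List Ty} {N M : Tm} {σ τ : Ty}
    (hN : Typing Γ N σ) (hM : Typing (σ :: Γ) M τ) :
    Typing Γ (Tm.subst0 N M) τ := by
  refine typing_subst hM Γ _ ?_
  intro x σ' hx
  cases x with
  | zero => simp at hx; subst hx; exact hN
  | succ n => exact .var (by simpa using hx)

lemma typing_ctx_sub {Γ : List Ty} {M : Tm} {τ : Ty} (h : Typing Γ M τ) :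
    ∀ Δ, (∀ (x : Nat) σ, Γ[x]? = some σ → ∃ σ', Δ[x]? = some σ' ∧ TySub σ' σ) →
      Typing Δ M τ := by
  induction h with
  | var hx => intro Δ hΔ; obtain ⟨σ', h1, h2⟩ := hΔ _ _ hx; exact .sub (.var h1) h2
  | lam h ih =>
    intro Δ hΔ
    refine .lam (ih _ ?_)
    intro x σ' hx
    cases x with
    | zero => simp at hx; subst hx; exact ⟨_, rfl, .refl _⟩
    | succ n => simpa using hΔ n σ' (by simpa using hx)
  | app h₁ h₂ ih₁ ih₂ => intro Δ hΔ; exact .app (ih₁ _ hΔ) (ih₂ _ hΔ)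
  | inter h₁ h₂ ih₁ ih₂ => intro Δ hΔ; exact .inter (ih₁ _ hΔ) (ih₂ _ hΔ)
  | omega M => intro Δ hΔ; exact .omega _
  | sub h hs ih => intro Δ hΔ; exact .sub (ih _ hΔ) hs
  | empty fs => intro Δ hΔ; exact .empty _
  | rcd hl h ih => intro Δ hΔ; exact .rcd hl (ih _ hΔ)
  | sel h ih => intro Δ hΔ; exact .sel (ih _ hΔ)
  | merge h₁ h₂ hr₁ hr₂ hlbl ih₁ ih₂ =>
    intro Δ hΔ; exact .merge (ih₁ _ hΔ) (ih₂ _ hΔ) hr₁ hr₂ hlbl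

lemma typing_interList {Γ : List Ty} {M : Tm} {L : List Ty}
    (h : ∀ σ ∈ L, Typing Γ M σ) : Typing Γ M (interList L) := by
  induction L with
  | nil => exact .omega M
  | cons a t ih => exact .inter (h a (by simp)) (ih fun σ hσ => h σ (by simp [hσ]))

lemma lam_inv {Γ : List Ty} {M : Tm} {υ : Ty} (h : Typing Γ M υ) :
    ∀ P, M = .lam P → ∀ p ∈ arrs υ, Typing (p.1 :: Γ) P p.2 := by
  induction h with
  | lam h ih =>
    intro P hP p hp
    cases hP
    simp [arrs] at hp; subst hp
    exact h
  | inter h₁ h₂ ih₁ ih₂ =>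
    intro P hP p hp
    simp only [arrs] at hp
    rcases List.mem_append.1 hp with h | h
    exacts [ih₁ P hP p h, ih₂ P hP p h]
  | omega _ => intro P hP p hp; simp [arrs] at hp
  | sub h hs ih =>
    intro P hP p hp
    obtain ⟨S, hSm, hS1, hS2⟩ := arrs_sound hs p hp
    refine .sub (typing_interList ?_) hS2
    intro σ' hσ'
    simp only [List.mem_map] at hσ'
    obtain ⟨q, hq, rfl⟩ := hσ'
    refine typing_ctx_sub (ih P hP q (hSm q hq)) _ ?_
    intro x σ'' hx
    cases x with
    | zero =>
      simp at hx; subst hx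
      exact ⟨p.1, rfl, .trans hS1 (interList_le (List.mem_map_of_mem hq))⟩
    | succ n => exact ⟨σ'', by simpa using hx, .refl _⟩
  | var _ => intro P hP; cases hP
  | app _ _ _ _ => intro P hP; cases hP
  | empty _ => intro P hP; cases hP
  | rcd _ _ _ => intro P hP; cases hP
  | sel _ _ => intro P hP; cases hP
  | merge _ _ _ _ _ _ _ => intro P hP; cases hP

lemma rcd_inv {Γ : List Ty} {M : Tm} {υ : Ty} (h : Typing Γ M υ) :
    ∀ fs, M = .rcd fs → ∀ l σ, σ ∈ flds l υ →
      ∃ N, List.lookup l fs = some N ∧ Typing Γ N σ := by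
  induction h with
  | empty _ => intro fs hfs l σ hσ; simp [flds] at hσ
  | rcd hl h ih =>
    intro fs hfs l σ hσ
    cases hfs
    simp only [flds] at hσ
    split at hσ
    · rename_i he
      simp at hσ; subst hσ; subst he
      exact ⟨_, hl, h⟩
    · simp at hσ
  | inter h₁ h₂ ih₁ ih₂ =>
    intro fs hfs l σ hσ
    simp only [flds] at hσ
    rcases List.mem_append.1 hσ with h | h
    exacts [ih₁ fs hfs l σ h, ih₂ fs hfs l σ h]
  | omega _ => intro fs hfs l σ hσ; simp [flds] at hσ
  | sub h hs ih =>
    intro fs hfs l σ hσ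
    obtain ⟨S, hSne, hSm, hS⟩ := flds_sound hs l σ hσ
    obtain ⟨b, hb⟩ := List.exists_mem_of_ne_nil S hSne
    obtain ⟨N, hN, hTN⟩ := ih fs hfs l b (hSm b hb)
    refine ⟨N, hN, .sub (typing_interList ?_) hS⟩
    intro τ hτ
    obtain ⟨N', hN', hTN'⟩ := ih fs hfs l τ (hSm τ hτ)
    have he : N' = N := by rw [hN] at hN'; exact (Option.some.inj hN').symm
    exact he ▸ hTN'
  | var _ => intro fs hfs; cases hfs
  | lam _ _ => intro fs hfs; cases hfs
  | app _ _ _ _ => intro fs hfs; cases hfs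
  | sel _ _ => intro fs hfs; cases hfs
  | merge _ _ _ _ _ _ _ => intro fs hfs; cases hfs
/-! ### Canonical record types -/

def tkeys (L : List (Nat × Ty)) : List Nat := L.map Prod.fst

def mkRec : List (Nat × Ty) → Ty
  | [] => .empty
  | (l, σ) :: L => .inter (.fld l σ) (mkRec L)

lemma mkRec_isRec : ∀ L, IsRec (mkRec L)
  | [] => .empty
  | (l, σ) :: L => .inter (.fld l σ) (mkRec_isRec L)

lemma mkRec_le_empty : ∀ L, TySub (mkRec L) .empty
  | [] => .refl _
  | (l, σ) :: L => .trans (.inter_right _ _) (mkRec_le_empty L)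

lemma mkRec_le_fld : ∀ {L : List (Nat × Ty)} {l : Nat} {σ : Ty},
    (l, σ) ∈ L → TySub (mkRec L) (.fld l σ)
  | [], _, _, h => by cases h
  | (l', σ') :: L, l, σ, h => by
    rcases List.mem_cons.1 h with h | h
    · cases h; exact .inter_left _ _
    · exact .trans (.inter_right _ _) (mkRec_le_fld h)

lemma fld_interList {υ : Ty} {l : Nat} :
    ∀ {S : List Ty}, S ≠ [] → (∀ τ ∈ S, TySub υ (.fld l τ)) →
      TySub υ (.fld l (interList S))
  | [], h, _ => absurd rfl h
  | [τ], _, hall =>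
    .trans (hall τ (by simp)) (.fld_mono l (.le_inter (.refl _) (.le_omega _)))
  | τ :: τ' :: S, _, hall => by
    have h1 := hall τ (by simp)
    have h2 := fld_interList (S := τ' :: S) (by simp) fun x hx => hall x (by simp [hx])
    exact .trans (.le_inter h1 h2) (.fld_inter _ _ _)

lemma mkRec_le : ∀ {L L' : List (Nat × Ty)},
    (∀ l σ', (l, σ') ∈ L' →
      ∃ S, S ≠ [] ∧ (∀ τ ∈ S, (l, τ) ∈ L) ∧ TySub (interList S) σ') →
    TySub (mkRec L) (mkRec L')
  | L, [], _ => mkRec_le_empty L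
  | L, (l, σ') :: L', h => by
    obtain ⟨S, hne, hmem, hS⟩ := h l σ' (by simp)
    refine .le_inter (.trans (fld_interList hne fun τ hτ => mkRec_le_fld (hmem τ hτ))
      (.fld_mono l hS)) ?_
    exact mkRec_le fun l σ hm => h l σ (by simp [hm])

lemma mkRec_le_of_subset {L L' : List (Nat × Ty)} (h : ∀ p ∈ L', p ∈ L) :
    TySub (mkRec L) (mkRec L') :=
  mkRec_le fun l σ' hm => ⟨[σ'], by simp, by simpa using h _ hm, .inter_left _ _⟩

lemma TyEq.rfl (σ : Ty) : TyEq σ σ := ⟨.refl _, .refl _⟩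
lemma TyEq.symm {σ τ : Ty} (h : TyEq σ τ) : TyEq τ σ := ⟨h.2, h.1⟩
lemma TyEq.trans {σ τ υ : Ty} (h₁ : TyEq σ τ) (h₂ : TyEq τ υ) : TyEq σ υ :=
  ⟨.trans h₁.1 h₂.1, .trans h₂.2 h₁.2⟩
lemma TyEq.inter_congr {σ₁ σ₂ τ₁ τ₂ : Ty} (h₁ : TyEq σ₁ τ₁) (h₂ : TyEq σ₂ τ₂) :
    TyEq (.inter σ₁ σ₂) (.inter τ₁ τ₂) :=
  ⟨.le_inter (.trans (.inter_left _ _) h₁.1) (.trans (.inter_right _ _) h₂.1),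
   .le_inter (.trans (.inter_left _ _) h₁.2) (.trans (.inter_right _ _) h₂.2)⟩
lemma TyEq.merge_congr {ρ₁ ρ₂ ρ₁' ρ₂' : Ty} (hr₁ : IsRec ρ₁) (hr₂ : IsRec ρ₂)
    (hr₁' : IsRec ρ₁') (hr₂' : IsRec ρ₂') (h₁ : TyEq ρ₁ ρ₁') (h₂ : TyEq ρ₂ ρ₂') :
    TyEq (.merge ρ₁ ρ₂) (.merge ρ₁' ρ₂') := by
  have a1 : TySub (Ty.merge ρ₁ ρ₂) (.merge ρ₁' ρ₂) := .merge_mono_l hr₁ hr₁' hr₂ h₁.1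
  have a2 : TySub (Ty.merge ρ₁' ρ₂) (.merge ρ₁ ρ₂) := .merge_mono_l hr₁' hr₁ hr₂ h₁.2
  have b1 : TySub (Ty.merge ρ₁' ρ₂) (.merge ρ₁' ρ₂') := .merge_congr_r hr₁' hr₂ hr₂' h₂.1 h₂.2
  have b2 : TySub (Ty.merge ρ₁' ρ₂') (.merge ρ₁' ρ₂) := .merge_congr_r hr₁' hr₂' hr₂ h₂.2 h₂.1
  exact ⟨.trans a1 b1, .trans b2 a2⟩

lemma mkRec_append : ∀ L₁ L₂ : List (Nat × Ty),
    TyEq (mkRec (L₁ ++ L₂)) (.inter (mkRec L₁) (mkRec L₂))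
  | [], L₂ => ⟨.le_inter (mkRec_le_empty _) (.refl _), .inter_right _ _⟩
  | (l, σ) :: L₁, L₂ => by
    have ih := mkRec_append L₁ L₂
    constructor
    · refine .le_inter (.le_inter (.inter_left _ _) ?_) ?_
      · exact .trans (.inter_right _ _) (.trans ih.1 (.inter_left _ _))
      · exact .trans (.inter_right _ _) (.trans ih.1 (.inter_right _ _))
    · refine .le_inter (.trans (.inter_left _ _) (.inter_left _ _)) ?_
      refine .trans ?_ ih.2
      exact .le_inter (.trans (.inter_left _ _) (.inter_right _ _)) (.inter_right _ _)

lemma merge_fld_mkRec (l₀ : Nat) (σ₀ : Ty) :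
    ∀ L : List (Nat × Ty), TyEq (.merge (.fld l₀ σ₀) (mkRec L))
      (mkRec (if l₀ ∈ tkeys L then L else L ++ [(l₀, σ₀)]))
  | [] => by
    simp only [tkeys, List.map_nil, List.not_mem_nil, if_false, List.nil_append]
    constructor
    · exact .trans (.merge_empty_r (.fld _ _)) (.le_inter (.refl _) (.fld_empty _ _))
    · exact .trans (.inter_left _ _) (.merge_empty_r' (.fld _ _))
  | (l, τ) :: L => by
    by_cases hl : l = l₀
    · subst hl
      have hk : l ∈ tkeys ((l, τ) :: L) := by simp [tkeys]
      rw [if_pos hk]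
      exact ⟨.fld_absorb l σ₀ τ (mkRec_isRec L), .fld_absorb' l σ₀ τ (mkRec_isRec L)⟩
    · have hne : l₀ ≠ l := fun h => hl h.symm
      have hcomm : TyEq (.merge (.fld l₀ σ₀) (mkRec ((l, τ) :: L)))
          (.inter (.fld l τ) (.merge (.fld l₀ σ₀) (mkRec L))) :=
        ⟨.fld_comm σ₀ τ hne (mkRec_isRec L), .fld_comm' σ₀ τ hne (mkRec_isRec L)⟩
      have ih := merge_fld_mkRec l₀ σ₀ L
      have hmain := TyEq.trans hcomm (TyEq.inter_congr (TyEq.rfl _) ih)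
      by_cases hk : l₀ ∈ tkeys L
      · have hk' : l₀ ∈ tkeys ((l, τ) :: L) := by simp [tkeys] at hk ⊢; exact Or.inr hk
        rw [if_pos hk] at hmain
        rw [if_pos hk']
        exact hmain
      · have hk' : l₀ ∉ tkeys ((l, τ) :: L) := by
          simp [tkeys] at hk ⊢; exact ⟨hne, hk⟩
        rw [if_neg hk] at hmain
        rw [if_neg hk']
        exact hmain

def mergeTL (L₁ L₂ : List (Nat × Ty)) : List (Nat × Ty) :=
  L₁.filter (fun p => decide (p.1 ∉ tkeys L₂)) ++ L₂

lemma merge_mkRec : ∀ L₁ L₂ : List (Nat × Ty),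
    TyEq (.merge (mkRec L₁) (mkRec L₂)) (mkRec (mergeTL L₁ L₂))
  | [], L₂ => by
    have : mergeTL [] L₂ = L₂ := by simp [mergeTL]
    rw [this]
    exact ⟨.merge_empty_l (mkRec_isRec L₂), .merge_empty_l' (mkRec_isRec L₂)⟩
  | (l, σ) :: L₁, L₂ => by
    have hdist : TyEq (.merge (mkRec ((l, σ) :: L₁)) (mkRec L₂))
        (.inter (.merge (.fld l σ) (mkRec L₂)) (.merge (mkRec L₁) (mkRec L₂))) :=
      ⟨.merge_inter (.fld _ _) (mkRec_isRec _) (mkRec_isRec _),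
       .merge_inter' (.fld _ _) (mkRec_isRec _) (mkRec_isRec _)⟩
    have ih := merge_mkRec L₁ L₂
    have hpeel := merge_fld_mkRec l σ L₂
    have hmain := TyEq.trans hdist (TyEq.inter_congr hpeel ih)
    by_cases hk : l ∈ tkeys L₂
    · have ht : mergeTL ((l, σ) :: L₁) L₂ = mergeTL L₁ L₂ := by
        simp [mergeTL, List.filter, hk]
      rw [ht]
      rw [if_pos hk] at hmain
      refine TyEq.trans hmain ?_
      constructor
      · exact .inter_right _ _
      · refine .le_inter (mkRec_le_of_subset fun p hp => ?_) (.refl _)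
        exact List.mem_append_right _ hp
    · have ht : mergeTL ((l, σ) :: L₁) L₂ = (l, σ) :: mergeTL L₁ L₂ := by
        simp [mergeTL, List.filter, hk]
      rw [ht]
      rw [if_neg hk] at hmain
      refine TyEq.trans hmain ?_
      refine TyEq.trans (TyEq.symm (mkRec_append (L₂ ++ [(l, σ)]) (mergeTL L₁ L₂))) ?_
      constructor
      · refine mkRec_le_of_subset fun p hp => ?_
        rcases List.mem_cons.1 hp with h | h
        · exact List.mem_append_left _ (List.mem_append_right _ (by simp [h]))
        · exact List.mem_append_right _ h
      · refine mkRec_le_of_subset fun p hp => ?_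
        rcases List.mem_append.1 hp with h | h
        · rcases List.mem_append.1 h with h | h
          · exact List.mem_cons_of_mem _ (List.mem_append_right _ h)
          · simp at h; subst h; exact List.mem_cons_self
        · exact List.mem_cons_of_mem _ h

lemma canon {ρ : Ty} (h : IsRec ρ) :
    ∃ L : List (Nat × Ty), TyEq ρ (mkRec L) ∧ (∀ l, l ∈ tkeys L ↔ l ∈ lbl ρ) ∧
      ∀ l σ, (l, σ) ∈ L → TySub (interList (flds l ρ)) σ := by
  induction h with
  | empty => exact ⟨[], TyEq.rfl _, by simp [tkeys, lbl], by simp⟩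
  | fld l₀ σ₀ =>
    refine ⟨[(l₀, σ₀)], ?_, by simp [tkeys, lbl], ?_⟩
    · exact ⟨.le_inter (.refl _) (.fld_empty _ _), .inter_left _ _⟩
    · intro l σ hm
      simp at hm
      obtain ⟨rfl, rfl⟩ := hm
      have he : flds l (Ty.fld l σ) = [σ] := by simp [flds]
      rw [he]
      exact .inter_left _ _
  | @inter ρ₁ ρ₂ h₁ h₂ ih₁ ih₂ =>
    obtain ⟨L₁, e₁, k₁, v₁⟩ := ih₁
    obtain ⟨L₂, e₂, k₂, v₂⟩ := ih₂
    refine ⟨L₁ ++ L₂, ?_, ?_, ?_⟩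
    · exact TyEq.trans (TyEq.inter_congr e₁ e₂) (TyEq.symm (mkRec_append L₁ L₂))
    · intro l
      have h1 : l ∈ tkeys (L₁ ++ L₂) ↔ l ∈ tkeys L₁ ∨ l ∈ tkeys L₂ := by simp [tkeys]
      rw [h1, k₁, k₂]
      simp [lbl]
    · intro l σ hm
      rcases List.mem_append.1 hm with h | h
      · exact .trans (interList_append_le_left _ _) (v₁ l σ h)
      · exact .trans (interList_append_le_right _ _) (v₂ l σ h)
  | @merge ρ₁ ρ₂ h₁ h₂ ih₁ ih₂ =>
    obtain ⟨L₁, e₁, k₁, v₁⟩ := ih₁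
    obtain ⟨L₂, e₂, k₂, v₂⟩ := ih₂
    refine ⟨mergeTL L₁ L₂, ?_, ?_, ?_⟩
    · refine TyEq.trans ?_ (merge_mkRec L₁ L₂)
      exact TyEq.merge_congr h₁ h₂ (mkRec_isRec _) (mkRec_isRec _) e₁ e₂
    · intro l
      have h1 : l ∈ tkeys (mergeTL L₁ L₂) ↔
          (l ∈ tkeys L₁ ∧ l ∉ tkeys L₂) ∨ l ∈ tkeys L₂ := by
        simp only [mergeTL, tkeys, List.map_append, List.mem_append, List.mem_map, List.mem_filter]
        constructor
        · rintro (⟨p, ⟨hp, hd⟩, rfl⟩ | h)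
          · exact Or.inl ⟨⟨p, hp, rfl⟩, of_decide_eq_true hd⟩
          · exact Or.inr h
        · rintro (⟨⟨p, hp, rfl⟩, hn⟩ | h)
          · exact Or.inl ⟨p, ⟨hp, decide_eq_true hn⟩, rfl⟩
          · exact Or.inr h
      rw [h1, k₁, k₂]
      simp [lbl]
      try tauto
    · intro l σ hm
      rcases List.mem_append.1 hm with h | h
      · have h' := List.mem_filter.1 h
        have hk2 : l ∉ tkeys L₂ := by simpa using h'.2
        have hl2 : l ∉ lbl ρ₂ := fun hx => hk2 ((k₂ l).2 hx)
        have he : flds l (Ty.merge ρ₁ ρ₂) = flds l ρ₁ := by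
          rw [show flds l (Ty.merge ρ₁ ρ₂)
              = if l ∈ lbl ρ₂ then flds l ρ₂ else flds l ρ₁ from rfl, if_neg hl2]
        rw [he]
        exact v₁ l σ h'.1
      · have hk2 : l ∈ tkeys L₂ := List.mem_map_of_mem (f := Prod.fst) h
        have hl2 : l ∈ lbl ρ₂ := (k₂ l).1 hk2
        have he : flds l (Ty.merge ρ₁ ρ₂) = flds l ρ₂ := by
          rw [show flds l (Ty.merge ρ₁ ρ₂)
              = if l ∈ lbl ρ₂ then flds l ρ₂ else flds l ρ₁ from rfl, if_pos hl2]
        rw [he]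
        exact v₂ l σ h
/-! ### Typing records by coverage, and the merge reduction -/

lemma typing_mkRec {Γ : List Ty} {h : List (Nat × Tm)} :
    ∀ {K : List (Nat × Ty)},
      (∀ l σ, (l, σ) ∈ K → ∃ N, List.lookup l h = some N ∧ Typing Γ N σ) →
      Typing Γ (.rcd h) (mkRec K)
  | [], _ => .empty _
  | (l, σ) :: K, hK => by
    obtain ⟨N, hN, hTN⟩ := hK l σ (by simp)
    exact .inter (.rcd hN hTN) (typing_mkRec fun l' σ' hm => hK l' σ' (by simp [hm]))

lemma typing_rcd_of_cov {Γ : List Ty} {h : List (Nat × Tm)} {ρ : Ty} (hr : IsRec ρ)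
    (hcov : ∀ l σ, σ ∈ flds l ρ → ∃ N, List.lookup l h = some N ∧ Typing Γ N σ) :
    Typing Γ (.rcd h) ρ := by
  obtain ⟨L, heq, hkeys, hval⟩ := canon hr
  have hK : ∀ l σ, (l, σ) ∈ L.map (fun p => (p.1, interList (flds p.1 ρ))) →
      ∃ N, List.lookup l h = some N ∧ Typing Γ N σ := by
    intro l σ hm
    simp only [List.mem_map] at hm
    obtain ⟨p, hp, he⟩ := hm
    obtain ⟨l', σ'⟩ := p
    cases he
    have hl : l' ∈ lbl ρ := (hkeys l').1 (List.mem_map_of_mem (f := Prod.fst) hp)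
    have hne : flds l' ρ ≠ [] := by rw [Ne, flds_eq_nil_iff]; simpa using hl
    obtain ⟨τ₀, hτ₀⟩ := List.exists_mem_of_ne_nil _ hne
    obtain ⟨N, hN, _⟩ := hcov l' τ₀ hτ₀
    refine ⟨N, hN, typing_interList ?_⟩
    intro τ hτ
    obtain ⟨N', hN', hTN'⟩ := hcov l' τ hτ
    have he : N' = N := by rw [hN] at hN'; exact (Option.some.inj hN').symm
    exact he ▸ hTN'
  refine .sub (typing_mkRec hK) (.trans (mkRec_le ?_) heq.2)
  intro l σ' hm
  refine ⟨[interList (flds l ρ)], by simp, ?_, .trans (.inter_left _ _) (hval l σ' hm)⟩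
  intro τ hτ
  simp at hτ; subst hτ
  exact List.mem_map.2 ⟨(l, σ'), hm, rfl⟩

lemma lookup_append_some {α β : Type _} [BEq α] {l : α} {M : β} :
    ∀ {xs : List (α × β)} (ys : List (α × β)), List.lookup l xs = some M →
      List.lookup l (xs ++ ys) = some M
  | [], ys, h => by simp [List.lookup] at h
  | (k, N) :: xs, ys, h => by
    rw [List.cons_append]
    cases hE : (l == k) with
    | true => simp [List.lookup, hE] at h ⊢; exact h
    | false =>
      simp only [List.lookup, hE] at h ⊢
      exact lookup_append_some ys h

lemma lookup_append_none {α β : Type _} [BEq α] {l : α} :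
    ∀ {xs : List (α × β)} (ys : List (α × β)), List.lookup l xs = none →
      List.lookup l (xs ++ ys) = List.lookup l ys
  | [], ys, _ => by simp
  | (k, N) :: xs, ys, h => by
    rw [List.cons_append]
    cases hE : (l == k) with
    | true => simp [List.lookup, hE] at h
    | false =>
      simp only [List.lookup, hE] at h ⊢
      exact lookup_append_none ys h

lemma lookup_filter_none {l : Nat} {gs : List (Nat × Tm)} (h : l ∈ Tm.keys gs) :
    ∀ fs : List (Nat × Tm),
      List.lookup l (fs.filter fun p => decide (p.1 ∉ Tm.keys gs)) = none
  | [] => rfl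
  | (k, N) :: fs => by
    by_cases hk : l = k
    · subst hk
      have hd : decide (l ∉ Tm.keys gs) = false := by simpa using h
      simp only [List.filter, hd]
      exact lookup_filter_none h fs
    · cases hd : decide (k ∉ Tm.keys gs) with
      | false =>
        simp only [List.filter, hd]
        exact lookup_filter_none h fs
      | true =>
        simp only [List.filter, hd, List.lookup,
          show (l == k) = false from by simpa using hk]
        exact lookup_filter_none h fs

lemma lookup_filter_of_not_mem {l : Nat} {gs : List (Nat × Tm)} (h : l ∉ Tm.keys gs) :
    ∀ fs : List (Nat × Tm),
      List.lookup l (fs.filter fun p => decide (p.1 ∉ Tm.keys gs)) = List.lookup l fs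
  | [] => rfl
  | (k, N) :: fs => by
    by_cases hk : l = k
    · subst hk
      have hd : decide (l ∉ Tm.keys gs) = true := by simpa using h
      simp only [List.filter, hd, List.lookup, show (l == l) = true from by simp]
    · cases hd : decide (k ∉ Tm.keys gs) with
      | false =>
        simp only [List.filter, hd, List.lookup,
          show (l == k) = false from by simpa using hk]
        exact lookup_filter_of_not_mem h fs
      | true =>
        simp only [List.filter, hd, List.lookup,
          show (l == k) = false from by simpa using hk]
        exact lookup_filter_of_not_mem h fs

lemma typing_mergeRcd {Γ : List Ty} {fs gs : List (Nat × Tm)} {ρ₁ ρ₂ : Ty}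
    (h₁ : Typing Γ (.rcd fs) ρ₁) (h₂ : Typing Γ (.rcd gs) ρ₂)
    (r₁ : IsRec ρ₁) (r₂ : IsRec ρ₂) (hl : Tm.lblR gs = lbl ρ₂) :
    Typing Γ (.rcd (Tm.mergeFields fs gs)) (.merge ρ₁ ρ₂) := by
  refine typing_rcd_of_cov (.merge r₁ r₂) ?_
  intro l σ hσ
  by_cases hc : l ∈ lbl ρ₂
  · rw [show flds l (Ty.merge ρ₁ ρ₂)
        = if l ∈ lbl ρ₂ then flds l ρ₂ else flds l ρ₁ from rfl, if_pos hc] at hσ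
    obtain ⟨N, hN, hTN⟩ := rcd_inv h₂ gs rfl l σ hσ
    refine ⟨N, ?_, hTN⟩
    have hkg : l ∈ Tm.keys gs := by
      have : l ∈ Tm.lblR gs := hl ▸ hc
      simpa [Tm.lblR] using this
    rw [Tm.mergeFields, lookup_append_none gs (lookup_filter_none hkg fs)]
    exact hN
  · rw [show flds l (Ty.merge ρ₁ ρ₂)
        = if l ∈ lbl ρ₂ then flds l ρ₂ else flds l ρ₁ from rfl, if_neg hc] at hσ
    obtain ⟨N, hN, hTN⟩ := rcd_inv h₁ fs rfl l σ hσ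
    refine ⟨N, ?_, hTN⟩
    have hkg : l ∉ Tm.keys gs := by
      intro hx
      have : l ∈ Tm.lblR gs := by simpa [Tm.lblR] using hx
      exact hc (hl ▸ this)
    rw [Tm.mergeFields]
    exact lookup_append_some gs (by rw [lookup_filter_of_not_mem hkg fs]; exact hN)
/-- Subject reduction: typing is preserved under reduction. -/
theorem subject_reduction (Γ : List Ty) (M N : Tm) (σ : Ty)
    (hM : Typing Γ M σ) (hR : Red M N) :
    Typing Γ N σ := by
  revert hR
  induction hM generalizing N with
  | var hx => intro hR; cases hR
  | lam h ih =>
    intro hR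
    cases hR with
    | lam hr => exact .lam (ih _ hr)
  | @app _ _ _ σ₀ τ₀ h₁ h₂ ih₁ ih₂ =>
    intro hR
    cases hR with
    | beta P Narg =>
      exact typing_subst0 h₂ (lam_inv h₁ P rfl (σ₀, τ₀) (by simp [arrs]))
    | appL N₀ hr => exact .app (ih₁ _ hr) h₂
    | appR M₀ hr => exact .app h₁ (ih₂ _ hr)
  | inter h₁ h₂ ih₁ ih₂ => intro hR; exact .inter (ih₁ _ hR) (ih₂ _ hR)
  | omega _ => intro hR; exact .omega _
  | sub h hs ih => intro hR; exact .sub (ih _ hR) hs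
  | empty fs =>
    intro hR
    cases hR with
    | rcdField fs₀ gs₀ l hr => exact .empty _
  | @rcd _ _ lt M₁ σ₀ hl h ih =>
    intro hR
    cases hR with
    | @rcdField M₀ M₀' fs₀ gs₀ l₀ hr =>
      cases hf : List.lookup lt fs₀ with
      | some P =>
        rw [lookup_append_some _ hf] at hl
        injection hl with he
        subst he
        exact .rcd (lookup_append_some _ hf) h
      | none =>
        rw [lookup_append_none _ hf] at hl
        by_cases hk : lt = l₀
        · subst hk
          have he : M₀ = M₁ := by
            simpa [List.lookup] using hl
          subst he
          refine .rcd ?_ (ih _ hr)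
          rw [lookup_append_none _ hf]
          simp [List.lookup]
        · have hbe : (lt == l₀) = false := by simpa using hk
          rw [show List.lookup lt ((l₀, M₀) :: gs₀) = List.lookup lt gs₀ from by
            simp [List.lookup, hbe]] at hl
          refine .rcd ?_ h
          rw [lookup_append_none _ hf]
          simp only [List.lookup, hbe]
          exact hl
  | @sel _ _ lt σ₀ h ih =>
    intro hR
    cases hR with
    | sel hlk =>
      obtain ⟨N', hN', hTN'⟩ := rcd_inv h _ rfl lt σ₀ (by simp [flds])
      have he : N' = N := Option.some.inj (hN'.symm.trans hlk)
      exact he ▸ hTN'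
    | selC l hr => exact .sel (ih _ hr)
  | merge h₁ h₂ r₁ r₂ hlbl ih₁ ih₂ =>
    intro hR
    cases hR with
    | mergeRcd fs₀ gs₀ => exact typing_mergeRcd h₁ h₂ r₁ r₂ hlbl
    | mergeL fs₀ hr => exact .merge (ih₁ _ hr) h₂ r₁ r₂ hlbl
    | @mergeField _ M₀ M₀' fs₀ gs₀ l₀ hr =>
      refine .merge h₁ (ih₂ _ (Red.rcdField fs₀ gs₀ l₀ hr)) r₁ r₂ ?_
      have he : Tm.lblR (fs₀ ++ (l₀, M₀') :: gs₀) = Tm.lblR (fs₀ ++ (l₀, M₀) :: gs₀) := by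
        simp [Tm.lblR, Tm.keys]
      rw [he]
      exact hlbl
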